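/- Let m be a positive squarefree integer, K = ℚ(√−m) with ring of integers 𝒪, and let ℓ be an odd prime. Let v, n be nonzero integers and ε ∈ K*, and let 𝔮 be a nonzero prime ideal of 𝒪, with ord_𝔮 denoting the 𝔮-adic valuation on K*. Suppose at least one of the following holds: (i) ord_𝔮(v), ord_𝔮(n√−m) and ord_𝔮(ε) are pairwise distinct modulo ℓ; (ii) ord_𝔮(2v), ord_𝔮(ε) and ord_𝔮(ε̄) are pairwise distinct modulo ℓ; (iii) ord_𝔮(2n√−m), ord_𝔮(ε) and ord_𝔮(ε̄) are pairwise distinct modulo ℓ. Then there exist no σ ∈ ℤ and η ∈ K with v σˡ + n√−m = ε ηˡ. -/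

import Mathlib

/-- The `𝔮`-adic order of a nonzero element `ξ` of a number field `K`: the exponent of the
prime `𝔮` of the ring of integers of `K` in the fractional ideal generated by `ξ`
(with junk value `0` at `ξ = 0`). -/
noncomputable def adicOrd {K : Type*} [Field K] [NumberField K]
    (𝔮 : IsDedekindDomain.HeightOneSpectrum (NumberField.RingOfIntegers K)) (ξ : K) : ℤ :=
  if h : 𝔮.valuation K ξ = 0 then 0 else - Multiplicative.toAdd (WithZero.unzero h)

open IsDedekindDomain

section Aux
variable {K : Type*} [Field K] [NumberField K]
  (𝔮 : HeightOneSpectrum (NumberField.RingOfIntegers K))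


lemma adicOrd_val_eq {x y : K} (h : 𝔮.valuation K x = 𝔮.valuation K y) :
    adicOrd 𝔮 x = adicOrd 𝔮 y := by
  unfold adicOrd
  by_cases hx : 𝔮.valuation K x = 0
  · rw [dif_pos hx, dif_pos (h ▸ hx)]
  · rw [dif_neg hx, dif_neg (h ▸ hx)]
    have : WithZero.unzero hx = WithZero.unzero (h ▸ hx) := by
      rw [← WithZero.coe_inj, WithZero.coe_unzero, WithZero.coe_unzero, h]
    rw [this]

lemma adicOrd_mul {x y : K} (hx : x ≠ 0) (hy : y ≠ 0) :
    adicOrd 𝔮 (x * y) = adicOrd 𝔮 x + adicOrd 𝔮 y := by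
  have hx' : 𝔮.valuation K x ≠ 0 := (Valuation.ne_zero_iff _).mpr hx
  have hy' : 𝔮.valuation K y ≠ 0 := (Valuation.ne_zero_iff _).mpr hy
  have hxy' : 𝔮.valuation K (x * y) ≠ 0 := by rw [map_mul]; exact mul_ne_zero hx' hy'
  unfold adicOrd
  rw [dif_neg hxy', dif_neg hx', dif_neg hy']
  have : WithZero.unzero hxy' = WithZero.unzero hx' * WithZero.unzero hy' := by
    rw [← WithZero.coe_inj, WithZero.coe_mul, WithZero.coe_unzero, WithZero.coe_unzero,
      WithZero.coe_unzero, map_mul]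
  rw [this, toAdd_mul]; ring

lemma adicOrd_one : adicOrd 𝔮 (1 : K) = 0 := by
  have h1 : 𝔮.valuation K (1 : K) ≠ 0 := by rw [map_one]; exact one_ne_zero
  unfold adicOrd
  rw [dif_neg h1]
  have : WithZero.unzero h1 = 1 := by
    rw [← WithZero.coe_inj, WithZero.coe_unzero, WithZero.coe_one, map_one]
  rw [this, toAdd_one, neg_zero]

lemma adicOrd_pow {x : K} (hx : x ≠ 0) (k : ℕ) :
    adicOrd 𝔮 (x ^ k) = (k : ℤ) * adicOrd 𝔮 x := by
  induction k with
  | zero => simp [adicOrd_one]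
  | succ k ih =>
      rw [pow_succ, adicOrd_mul 𝔮 (pow_ne_zero _ hx) hx, ih]
      push_cast; ring

lemma adicOrd_neg (x : K) : adicOrd 𝔮 (-x) = adicOrd 𝔮 x :=
  adicOrd_val_eq 𝔮 (by rw [Valuation.map_neg])

lemma adicOrd_add_eq {a b c : K} (hab : a + b = c) :
    adicOrd 𝔮 a = adicOrd 𝔮 b ∨ adicOrd 𝔮 c = adicOrd 𝔮 a ∨
      adicOrd 𝔮 c = adicOrd 𝔮 b := by
  by_cases h : 𝔮.valuation K a = 𝔮.valuation K b
  · exact Or.inl (adicOrd_val_eq 𝔮 h)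
  · have hm := Valuation.map_add_of_distinct_val (𝔮.valuation K) h
    rw [hab] at hm
    rcases max_cases (𝔮.valuation K a) (𝔮.valuation K b) with ⟨h1, _⟩ | ⟨h1, _⟩
    · exact Or.inr (Or.inl (adicOrd_val_eq 𝔮 (hm.trans h1)))
    · exact Or.inr (Or.inr (adicOrd_val_eq 𝔮 (hm.trans h1)))

lemma modeq_helper' {ℓ : ℕ} {a b k j : ℤ} (h : a + ℓ * k = b + ℓ * j) :
    a ≡ b [ZMOD ℓ] := by
  rw [Int.modEq_iff_dvd]
  exact ⟨k - j, by linear_combination (-1 : ℤ) * h⟩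

end Aux

/-- Valuation criterion ruling out solutions of `v σˡ + n√−m = ε ηˡ` in `K = ℚ(√−m)`:
if, at some prime `𝔮` of the ring of integers of `K`, one of
(i) `ord_𝔮(v), ord_𝔮(n√−m), ord_𝔮(ε)`,
(ii) `ord_𝔮(2v), ord_𝔮(ε), ord_𝔮(ε̄)`,
(iii) `ord_𝔮(2n√−m), ord_𝔮(ε), ord_𝔮(ε̄)`
is a triple that is pairwise distinct modulo the odd prime `ℓ`, then there are no `σ ∈ ℤ`
and `η ∈ K` with `v σˡ + n√−m = ε ηˡ`.  Here `K = ℚ(√−m)` is presented as a number field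
generated over `ℚ` by an element `θ` with `θ² = −m`, and `ε̄` is the image of `ε` under the
nontrivial automorphism `conj` of `K/ℚ` (which sends `θ` to `−θ`). -/
theorem valuative_criterion_no_solutions
    (m : ℕ) (hm : 0 < m) (hsf : Squarefree m)
    (K : Type*) [Field K] [NumberField K]
    (θ : K) (hθ : θ ^ 2 = -(m : K))
    (hgen : ∀ x : K, ∃ a b : ℚ, x = (a : K) + (b : K) * θ)
    (conj : K ≃ₐ[ℚ] K) (hconj : conj θ = -θ)
    (ℓ : ℕ) (hℓ : ℓ.Prime) (hodd : ℓ ≠ 2)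
    (v n : ℤ) (hv : v ≠ 0) (hn : n ≠ 0)
    (ε : K) (hε : ε ≠ 0)
    (𝔮 : IsDedekindDomain.HeightOneSpectrum (NumberField.RingOfIntegers K))
    (hcase :
      ( ¬ adicOrd 𝔮 ((v : K)) ≡ adicOrd 𝔮 ((n : K) * θ) [ZMOD ℓ] ∧
        ¬ adicOrd 𝔮 ((v : K)) ≡ adicOrd 𝔮 ε [ZMOD ℓ] ∧
        ¬ adicOrd 𝔮 ((n : K) * θ) ≡ adicOrd 𝔮 ε [ZMOD ℓ] ) ∨
      ( ¬ adicOrd 𝔮 ((2 * v : ℤ) : K) ≡ adicOrd 𝔮 ε [ZMOD ℓ] ∧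
        ¬ adicOrd 𝔮 ((2 * v : ℤ) : K) ≡ adicOrd 𝔮 (conj ε) [ZMOD ℓ] ∧
        ¬ adicOrd 𝔮 ε ≡ adicOrd 𝔮 (conj ε) [ZMOD ℓ] ) ∨
      ( ¬ adicOrd 𝔮 (2 * (n : K) * θ) ≡ adicOrd 𝔮 ε [ZMOD ℓ] ∧
        ¬ adicOrd 𝔮 (2 * (n : K) * θ) ≡ adicOrd 𝔮 (conj ε) [ZMOD ℓ] ∧
        ¬ adicOrd 𝔮 ε ≡ adicOrd 𝔮 (conj ε) [ZMOD ℓ] ) ) :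
    ¬ ∃ (σ : ℤ) (η : K), (v : K) * (σ : K) ^ ℓ + (n : K) * θ = ε * η ^ ℓ := by
  rintro ⟨σ, η, heq⟩
  -- basic nonvanishing facts
  have hmK : (m : K) ≠ 0 := Nat.cast_ne_zero.mpr hm.ne'
  have hθ0 : θ ≠ 0 := by
    intro h
    apply hmK
    have h2 : -(m : K) = 0 := by rw [← hθ, h]; ring
    exact neg_eq_zero.mp h2
  have hvK : (v : K) ≠ 0 := Int.cast_ne_zero.mpr hv
  have hnK : (n : K) ≠ 0 := Int.cast_ne_zero.mpr hn
  have hnθ : (n : K) * θ ≠ 0 := mul_ne_zero hnK hθ0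
  have hεc : conj ε ≠ 0 := fun h => hε (conj.injective (by rw [h, map_zero]))
  have hℓ0 : ℓ ≠ 0 := hℓ.ne_zero
  -- the conjugate equation
  have heq2 : (v : K) * (σ : K) ^ ℓ - (n : K) * θ = conj ε * (conj η) ^ ℓ := by
    have := congrArg conj heq
    simp only [map_add, map_mul, map_pow, map_intCast, hconj, mul_neg] at this
    linear_combination this
  -- η ≠ 0
  have hη : η ≠ 0 := by
    intro h
    rw [h, zero_pow hℓ0, mul_zero] at heq
    rw [h, map_zero, zero_pow hℓ0, mul_zero] at heq2
    have hA : (v : K) * (σ : K) ^ ℓ = 0 := by linear_combination (heq + heq2) / 2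
    rw [hA, zero_add] at heq
    exact hnθ heq
  have hηK : η ^ ℓ ≠ 0 := pow_ne_zero _ hη
  have hηcK : (conj η) ^ ℓ ≠ 0 :=
    pow_ne_zero _ (fun h => hη (conj.injective (by rw [h, map_zero])))
  have ordc : adicOrd 𝔮 (ε * η ^ ℓ) = adicOrd 𝔮 ε + (ℓ : ℤ) * adicOrd 𝔮 η := by
    rw [adicOrd_mul 𝔮 hε hηK, adicOrd_pow 𝔮 hη]
  have ordc2 : adicOrd 𝔮 (conj ε * (conj η) ^ ℓ)
      = adicOrd 𝔮 (conj ε) + (ℓ : ℤ) * adicOrd 𝔮 (conj η) := by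
    rw [adicOrd_mul 𝔮 hεc hηcK,
      adicOrd_pow 𝔮 (fun h => hη (conj.injective (by rw [h, map_zero])))]
  by_cases hσ : (σ : K) = 0
  · -- σ = 0 : n θ = ε η^ℓ and -(n θ) = conj ε (conj η)^ℓ
    rw [hσ, zero_pow hℓ0, mul_zero, zero_add] at heq
    rw [hσ, zero_pow hℓ0, mul_zero, zero_sub] at heq2
    have c1 : adicOrd 𝔮 ((n : K) * θ) ≡ adicOrd 𝔮 ε [ZMOD ℓ] := by
      refine modeq_helper' (j := adicOrd 𝔮 η) (k := 0) ?_
      rw [← ordc, ← heq]; ring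
    have c2 : adicOrd 𝔮 ((n : K) * θ) ≡ adicOrd 𝔮 (conj ε) [ZMOD ℓ] := by
      refine modeq_helper' (j := adicOrd 𝔮 (conj η)) (k := 0) ?_
      rw [← ordc2, ← heq2, adicOrd_neg]; ring
    rcases hcase with ⟨_, _, h3⟩ | ⟨_, _, h3⟩ | ⟨_, _, h3⟩
    · exact h3 c1
    · exact h3 (c1.symm.trans c2)
    · exact h3 (c1.symm.trans c2)
  · -- main case
    have hσℓ : (σ : K) ^ ℓ ≠ 0 := pow_ne_zero _ hσ
    rcases hcase with ⟨h1, h2, h3⟩ | ⟨h1, h2, h3⟩ | ⟨h1, h2, h3⟩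
    · -- case (i)
      have orda : adicOrd 𝔮 ((v : K) * (σ : K) ^ ℓ)
          = adicOrd 𝔮 ((v : K)) + (ℓ : ℤ) * adicOrd 𝔮 ((σ : K)) := by
        rw [adicOrd_mul 𝔮 hvK hσℓ, adicOrd_pow 𝔮 hσ]
      rcases adicOrd_add_eq 𝔮 heq with h | h | h
      · refine h1 (modeq_helper' (k := adicOrd 𝔮 ((σ : K))) (j := 0) ?_)
        rw [← orda, h]; ring
      · refine h2 (modeq_helper' (k := adicOrd 𝔮 ((σ : K))) (j := adicOrd 𝔮 η) ?_)
        rw [← orda, ← ordc, h]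
      · refine h3 (modeq_helper' (k := 0) (j := adicOrd 𝔮 η) ?_)
        rw [← ordc, ← h]; ring
    · -- case (ii)
      have h2v : ((2 * v : ℤ) : K) ≠ 0 := Int.cast_ne_zero.mpr (by omega)
      have heq3 : ε * η ^ ℓ + conj ε * (conj η) ^ ℓ = ((2 * v : ℤ) : K) * (σ : K) ^ ℓ := by
        push_cast
        linear_combination -heq - heq2
      have orda : adicOrd 𝔮 (((2 * v : ℤ) : K) * (σ : K) ^ ℓ)
          = adicOrd 𝔮 ((2 * v : ℤ) : K) + (ℓ : ℤ) * adicOrd 𝔮 ((σ : K)) := by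
        rw [adicOrd_mul 𝔮 h2v hσℓ, adicOrd_pow 𝔮 hσ]
      rcases adicOrd_add_eq 𝔮 heq3 with h | h | h
      · refine h3 (modeq_helper' (k := adicOrd 𝔮 η) (j := adicOrd 𝔮 (conj η)) ?_)
        rw [← ordc, ← ordc2, h]
      · refine h1 (modeq_helper' (k := adicOrd 𝔮 ((σ : K))) (j := adicOrd 𝔮 η) ?_)
        rw [← orda, ← ordc, h]
      · refine h2 (modeq_helper' (k := adicOrd 𝔮 ((σ : K))) (j := adicOrd 𝔮 (conj η)) ?_)
        rw [← orda, ← ordc2, h]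
    · -- case (iii)
      have heq4 : ε * η ^ ℓ + -(conj ε * (conj η) ^ ℓ) = 2 * (n : K) * θ := by
        linear_combination heq2 - heq
      have ordb : adicOrd 𝔮 (-(conj ε * (conj η) ^ ℓ))
          = adicOrd 𝔮 (conj ε) + (ℓ : ℤ) * adicOrd 𝔮 (conj η) := by
        rw [adicOrd_neg, ordc2]
      rcases adicOrd_add_eq 𝔮 heq4 with h | h | h
      · refine h3 (modeq_helper' (k := adicOrd 𝔮 η) (j := adicOrd 𝔮 (conj η)) ?_)
        rw [← ordc, ← ordb, h]
      · refine h1 (modeq_helper' (k := 0) (j := adicOrd 𝔮 η) ?_)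
        rw [← ordc, ← h]; ring
      · refine h2 (modeq_helper' (k := 0) (j := adicOrd 𝔮 (conj η)) ?_)
        rw [← ordb, ← h]; ring
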